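/- Let G act on a tree T without edge inversions, and let e = {u,v} be a collapsible edge, i.e., Stab(u) ≤ Stab(v) and u, v lie in different G-orbits. Let T' be the tree obtained by equivariantly collapsing the G-orbit of e (identifying the endpoints of each translate of e). Then the stabiliser of the image vertex φ(e) in T' equals Stab(v). -/
import Mathlib


/-- The action of `G` on the vertices preserves adjacency (acts by simplicial
automorphisms). -/
def PreservesAdj (G : Type*) {V : Type*} [Group G] [MulAction G V]
    (T : SimpleGraph V) : Prop :=
  ∀ (g : G) (u v : V), T.Adj u v → T.Adj (g • u) (g • v)

/-- The action has no edge inversions. -/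
def NoInversions (G : Type*) {V : Type*} [Group G] [MulAction G V]
    (T : SimpleGraph V) : Prop :=
  ∀ (g : G) (u v : V), T.Adj u v → ¬ (g • u = v ∧ g • v = u)

/-- The relation identifying each translate `g • u` with `g • v`; the collapsed tree has
vertex set `Quot (collapseRel G u v)`. -/
def collapseRel (G : Type*) {V : Type*} [Group G] [MulAction G V] (u v : V) :
    V → V → Prop :=
  fun x y => ∃ g : G, x = g • u ∧ y = g • v

/-- After collapsing the orbit of a collapsible edge `e = {u,v}` (with
`Stab(u) ≤ Stab(v)` and `u, v` in distinct orbits), the stabiliser of the image vertex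
`φ(e)` equals `Stab(v)`. -/
theorem collapse_vertex_stabilizer {G V : Type*} [Group G] [MulAction G V]
    (T : SimpleGraph V) (hT : T.IsTree)
    (hpres : PreservesAdj G T) (hinv : NoInversions G T)
    (u v : V) (he : T.Adj u v)
    (hstab : MulAction.stabilizer G u ≤ MulAction.stabilizer G v)
    (horb : v ∉ MulAction.orbit G u) :
    ∀ g : G, Quot.mk (collapseRel G u v) (g • v) = Quot.mk (collapseRel G u v) v ↔
      g ∈ MulAction.stabilizer G v := by
  classical
  -- orbit of v is disjoint from orbit of u
  have hdisj : ∀ k : G, (k • v : V) ∉ MulAction.orbit G u := by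
    intro k hk
    obtain ⟨m, hm⟩ := hk
    exact horb ⟨k⁻¹ * m, by simp [mul_smul, hm]⟩
  -- a separating function on V
  set f : V → V := fun x =>
    if hx : x ∈ MulAction.orbit G u then hx.choose • v else x with hf
  have hfu : ∀ k : G, f (k • u) = k • v := by
    intro k
    have hk : (k • u : V) ∈ MulAction.orbit G u := ⟨k, rfl⟩
    have hspec : hk.choose • u = k • u := hk.choose_spec
    have hmem : k⁻¹ * hk.choose ∈ MulAction.stabilizer G u := by
      simp only [MulAction.mem_stabilizer_iff, mul_smul, hspec, inv_smul_smul]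
    have hv := hstab hmem
    simp only [MulAction.mem_stabilizer_iff, mul_smul] at hv
    have : hk.choose • v = k • v := by
      have := congrArg (k • ·) hv
      simpa [smul_smul] using this
    simp [hf, hk, this]
  have hfv : ∀ k : G, f (k • v) = k • v := by
    intro k
    simp [hf, hdisj k]
  have hcompat : ∀ a b, collapseRel G u v a b → f a = f b := by
    rintro a b ⟨k, rfl, rfl⟩
    rw [hfu, hfv]
  intro g
  constructor
  · intro h
    have := congrArg (Quot.lift f hcompat) h
    simp only [Quot.lift_mk] at this
    have h1 : f (g • v) = g • v := hfv g
    have h2 : f v = v := by simpa using hfv (1 : G)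
    rw [h1, h2] at this
    exact this
  · intro hg
    have : g • v = v := hg
    rw [this]
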